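/- A permutation of [n] that avoids the pattern 123 has at most two fixed points. Moreover, at most one fixed point lies in the interval [1, n/2] and at most one lies in (n/2, n]. -/

import Mathlib

lemma aux_low {n : ℕ} (τ : Equiv.Perm (Fin n)) (i j : Fin n)
    (hfi : τ i = i) (hfj : τ j = j) (hij : i < j) (hj : 2 * ((j : ℕ) + 1) ≤ n) :
    ∃ k, j < k ∧ j < τ k := by
  by_contra h
  push_neg at h
  have hcard : (Finset.Ioi j).card ≤ ((Finset.Iio j).erase i).card := by
    apply Finset.card_le_card_of_injOn τ
    · intro k hk
      rw [Finset.mem_coe, Finset.mem_Ioi] at hk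
      have hkj : τ k ≤ j := h k hk
      have h1 : τ k ≠ j := fun e => absurd (τ.injective (e.trans hfj.symm)) hk.ne'
      have h2 : τ k ≠ i := fun e => absurd (τ.injective (e.trans hfi.symm)) (hij.trans hk).ne'
      exact Finset.mem_erase.mpr ⟨h2, Finset.mem_Iio.mpr (lt_of_le_of_ne hkj h1)⟩
    · exact τ.injective.injOn
  rw [Fin.card_Ioi, Finset.card_erase_of_mem (Finset.mem_Iio.mpr hij), Fin.card_Iio] at hcard
  have : (j : ℕ) < n := j.isLt
  omega

lemma aux_high {n : ℕ} (τ : Equiv.Perm (Fin n)) (i j : Fin n)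
    (hfi : τ i = i) (hfj : τ j = j) (hij : i < j) (hi : n < 2 * ((i : ℕ) + 1)) :
    ∃ k, k < i ∧ τ k < i := by
  by_contra h
  push_neg at h
  have hcard : (Finset.Iio i).card ≤ ((Finset.Ioi i).erase j).card := by
    apply Finset.card_le_card_of_injOn τ
    · intro k hk
      rw [Finset.mem_coe, Finset.mem_Iio] at hk
      have hki : i ≤ τ k := h k hk
      have h1 : τ k ≠ i := fun e => absurd (τ.injective (e.trans hfi.symm)) hk.ne
      have h2 : τ k ≠ j := fun e => absurd (τ.injective (e.trans hfj.symm)) (hk.trans hij).ne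
      exact Finset.mem_erase.mpr ⟨h2, Finset.mem_Ioi.mpr (lt_of_le_of_ne hki (Ne.symm h1))⟩
    · exact τ.injective.injOn
  rw [Fin.card_Iio, Finset.card_erase_of_mem (Finset.mem_Ioi.mpr hij), Fin.card_Ioi] at hcard
  have : (j : ℕ) < n := j.isLt
  omega

/-- A 123-avoiding permutation of [n] has at most two fixed points; at most one
fixed point lies in [1, n/2] and at most one in (n/2, n].  (Indices are 0-based,
so index `i : Fin n` corresponds to the element `i + 1` of `[n]`.) -/
theorem fixed_points_of_123_avoiding (n : ℕ) (τ : Equiv.Perm (Fin n))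
    (havoid : ¬ ∃ i j k : Fin n, i < j ∧ j < k ∧ τ i < τ j ∧ τ j < τ k) :
    (Finset.univ.filter (fun i : Fin n => τ i = i)).card ≤ 2 ∧
    (Finset.univ.filter (fun i : Fin n => τ i = i ∧ 2 * ((i : ℕ) + 1) ≤ n)).card ≤ 1 ∧
    (Finset.univ.filter (fun i : Fin n => τ i = i ∧ n < 2 * ((i : ℕ) + 1))).card ≤ 1 := by
  have hlow : (Finset.univ.filter (fun i : Fin n => τ i = i ∧ 2 * ((i : ℕ) + 1) ≤ n)).card ≤ 1 := by
    rw [Finset.card_le_one]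
    intro a ha b hb
    simp only [Finset.mem_filter, Finset.mem_univ, true_and] at ha hb
    by_contra hab
    rcases lt_or_gt_of_ne hab with hlt | hlt
    · obtain ⟨k, hk1, hk2⟩ := aux_low τ a b ha.1 hb.1 hlt hb.2
      exact havoid ⟨a, b, k, hlt, hk1, by rw [ha.1, hb.1]; exact hlt, by rw [hb.1]; exact hk2⟩
    · obtain ⟨k, hk1, hk2⟩ := aux_low τ b a hb.1 ha.1 hlt ha.2
      exact havoid ⟨b, a, k, hlt, hk1, by rw [ha.1, hb.1]; exact hlt, by rw [ha.1]; exact hk2⟩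
  have hhigh : (Finset.univ.filter (fun i : Fin n => τ i = i ∧ n < 2 * ((i : ℕ) + 1))).card ≤ 1 := by
    rw [Finset.card_le_one]
    intro a ha b hb
    simp only [Finset.mem_filter, Finset.mem_univ, true_and] at ha hb
    by_contra hab
    rcases lt_or_gt_of_ne hab with hlt | hlt
    · obtain ⟨k, hk1, hk2⟩ := aux_high τ a b ha.1 hb.1 hlt ha.2
      exact havoid ⟨k, a, b, hk1, hlt, by rw [ha.1]; exact hk2, by rw [ha.1, hb.1]; exact hlt⟩
    · obtain ⟨k, hk1, hk2⟩ := aux_high τ b a hb.1 ha.1 hlt hb.2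
      exact havoid ⟨k, b, a, hk1, hlt, by rw [hb.1]; exact hk2, by rw [ha.1, hb.1]; exact hlt⟩
  refine ⟨?_, hlow, hhigh⟩
  have hsub : (Finset.univ.filter (fun i : Fin n => τ i = i)) ⊆
      (Finset.univ.filter (fun i : Fin n => τ i = i ∧ 2 * ((i : ℕ) + 1) ≤ n)) ∪
      (Finset.univ.filter (fun i : Fin n => τ i = i ∧ n < 2 * ((i : ℕ) + 1))) := by
    intro x hx
    simp only [Finset.mem_filter, Finset.mem_univ, true_and, Finset.mem_union] at hx ⊢
    omega
  calc (Finset.univ.filter (fun i : Fin n => τ i = i)).card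
      ≤ _ := Finset.card_le_card hsub
    _ ≤ _ := Finset.card_union_le _ _
    _ ≤ 2 := by omega
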